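/- Fix a constant 0<α<1/100 and an integer k≥0. There exists a constant C depending only on α and k such that for all T≥2 and all real t, |W^{(k)}(t)| ≤ C·(T^{−1+α})^{k}, where W^{(k)} denotes the k-th derivative of W. -/

import Mathlib

open Real

namespace Stmt6Aux

/-- The basic bump seed `φ n u = exp (-(u^n))`. -/
noncomputable def phi (n : ℕ) (u : ℝ) : ℝ := Real.exp (-(u ^ n))

lemma contDiff_phi (n : ℕ) {N : WithTop ℕ∞} : ContDiff ℝ N (phi n) := by
  have : ContDiff ℝ N fun u : ℝ => -(u ^ n) := (contDiff_id.pow n).neg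
  exact Real.contDiff_exp.comp this

lemma phi_nonneg (n : ℕ) (u : ℝ) : 0 ≤ phi n u := (Real.exp_pos _).le

lemma phi_le_one (m : ℕ) (u : ℝ) : phi (2 * m) u ≤ 1 := by
  have : (0:ℝ) ≤ u ^ (2 * m) := by
    rw [pow_mul]; positivity
  show Real.exp _ ≤ 1
  exact Real.exp_le_one_iff.mpr (by linarith)

lemma hasDerivAt_phi (n : ℕ) (u : ℝ) :
    HasDerivAt (phi n) (-((n : ℝ) * u ^ (n - 1)) * phi n u) u := by
  have h1 : HasDerivAt (fun u : ℝ => -(u ^ n)) (-((n : ℝ) * u ^ (n - 1))) u :=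
    (hasDerivAt_pow n u).neg
  unfold phi
  simpa [phi, mul_comm] using h1.exp

/-- Each iterated derivative of `phi n` is a polynomial multiple of `phi n`. -/
lemma iteratedDeriv_phi (n i : ℕ) :
    ∃ P : Polynomial ℝ, ∀ u : ℝ, iteratedDeriv i (phi n) u = P.eval u * phi n u := by
  induction i with
  | zero => exact ⟨1, fun u => by simp⟩
  | succ i ih =>
    obtain ⟨P, hP⟩ := ih
    refine ⟨Polynomial.derivative P - Polynomial.C (n : ℝ) * Polynomial.X ^ (n - 1) * P,
      fun u => ?_⟩
    rw [iteratedDeriv_succ, funext hP]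
    have h : HasDerivAt (fun u : ℝ => P.eval u * phi n u)
        (P.derivative.eval u * phi n u + P.eval u * (-((n : ℝ) * u ^ (n - 1)) * phi n u)) u :=
      (P.hasDerivAt u).mul (hasDerivAt_phi n u)
    rw [h.deriv]
    simp only [Polynomial.eval_sub, Polynomial.eval_mul, Polynomial.eval_C, Polynomial.eval_pow,
      Polynomial.eval_X]
    ring

/-- Polynomial growth bound. -/
lemma poly_bound (P : Polynomial ℝ) :
    ∃ C : ℝ, 0 ≤ C ∧ ∀ u : ℝ, |P.eval u| ≤ C * (1 + u ^ 2) ^ P.natDegree := by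
  refine ⟨∑ i ∈ Finset.range (P.natDegree + 1), |P.coeff i|, by positivity, fun u => ?_⟩
  have hu1 : (1:ℝ) ≤ 1 + u ^ 2 := by nlinarith [sq_nonneg u]
  have hu : |u| ≤ 1 + u ^ 2 := by nlinarith [sq_nonneg (|u| - 1), sq_abs u]
  rw [Polynomial.eval_eq_sum_range]
  calc |∑ i ∈ Finset.range (P.natDegree + 1), P.coeff i * u ^ i|
      ≤ ∑ i ∈ Finset.range (P.natDegree + 1), |P.coeff i * u ^ i| :=
        Finset.abs_sum_le_sum_abs _ _
    _ ≤ ∑ i ∈ Finset.range (P.natDegree + 1), |P.coeff i| * (1 + u ^ 2) ^ P.natDegree := by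
        refine Finset.sum_le_sum fun i hi => ?_
        rw [abs_mul, abs_pow]
        refine mul_le_mul_of_nonneg_left ?_ (abs_nonneg _)
        calc |u| ^ i ≤ (1 + u ^ 2) ^ i := pow_le_pow_left₀ (abs_nonneg u) hu i
          _ ≤ (1 + u ^ 2) ^ P.natDegree :=
            pow_le_pow_right₀ hu1 (Nat.lt_succ_iff.mp (Finset.mem_range.mp hi))
    _ = (∑ i ∈ Finset.range (P.natDegree + 1), |P.coeff i|) * (1 + u ^ 2) ^ P.natDegree := by
        rw [Finset.sum_mul]

/-- `(1+u²)^q · exp(-(u^(2m)))` is uniformly bounded. -/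
lemma pexp_bound (m q : ℕ) (hm : 1 ≤ m) (u : ℝ) :
    (1 + u ^ 2) ^ q * phi (2 * m) u ≤ (q.factorial : ℝ) * Real.exp 2 := by
  have hv : (0:ℝ) ≤ u ^ 2 := sq_nonneg u
  have hpow : u ^ 2 - 1 ≤ u ^ (2 * m) := by
    rw [pow_mul]
    rcases le_total (u ^ 2) 1 with h | h
    · nlinarith [pow_nonneg hv m]
    · have := le_self_pow₀ h (by omega : m ≠ 0)
      linarith
  have h2 : phi (2 * m) u ≤ Real.exp (1 - u ^ 2) := by
    apply Real.exp_le_exp.mpr; linarith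
  have h1 : (1 + u ^ 2) ^ q ≤ (q.factorial : ℝ) * Real.exp (1 + u ^ 2) := by
    have := Real.pow_div_factorial_le_exp (x := 1 + u ^ 2) (by positivity) q
    have hf : (0:ℝ) < q.factorial := by positivity
    rw [div_le_iff₀ hf] at this
    linarith [this]
  calc (1 + u ^ 2) ^ q * phi (2 * m) u
      ≤ ((q.factorial : ℝ) * Real.exp (1 + u ^ 2)) * Real.exp (1 - u ^ 2) := by
        apply mul_le_mul h1 h2 (phi_nonneg _ _) (by positivity)
    _ = (q.factorial : ℝ) * Real.exp 2 := by
        rw [mul_assoc, ← Real.exp_add]; ring_nf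

/-- Decay bound for a single iterated derivative of `phi (2m)`. -/
lemma phi_decay (m p i : ℕ) (hm : 1 ≤ m) :
    ∃ K : ℝ, 0 ≤ K ∧ ∀ u : ℝ, |iteratedDeriv i (phi (2 * m)) u| * (1 + u ^ 2) ^ p ≤ K := by
  obtain ⟨P, hP⟩ := iteratedDeriv_phi (2 * m) i
  obtain ⟨C, hC0, hC⟩ := poly_bound P
  refine ⟨C * (((P.natDegree + p).factorial : ℝ) * Real.exp 2), by positivity, fun u => ?_⟩
  have hu1 : (0:ℝ) ≤ 1 + u ^ 2 := by positivity
  have h1 : |iteratedDeriv i (phi (2 * m)) u| ≤ C * (1 + u ^ 2) ^ P.natDegree * phi (2 * m) u := by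
    rw [hP u, abs_mul, abs_of_nonneg (phi_nonneg _ _)]
    exact mul_le_mul_of_nonneg_right (hC u) (phi_nonneg _ _)
  calc |iteratedDeriv i (phi (2 * m)) u| * (1 + u ^ 2) ^ p
      ≤ (C * (1 + u ^ 2) ^ P.natDegree * phi (2 * m) u) * (1 + u ^ 2) ^ p :=
        mul_le_mul_of_nonneg_right h1 (by positivity)
    _ = C * ((1 + u ^ 2) ^ (P.natDegree + p) * phi (2 * m) u) := by rw [pow_add]; ring
    _ ≤ C * (((P.natDegree + p).factorial : ℝ) * Real.exp 2) :=
        mul_le_mul_of_nonneg_left (pexp_bound m _ hm u) hC0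

/-- Decay bound, uniform over derivative orders `i ≤ k`. -/
lemma phi_decay_max (m p k : ℕ) (hm : 1 ≤ m) :
    ∃ K : ℝ, 0 ≤ K ∧ ∀ i ≤ k, ∀ u : ℝ,
      |iteratedDeriv i (phi (2 * m)) u| * (1 + u ^ 2) ^ p ≤ K := by
  induction k with
  | zero =>
    obtain ⟨K, hK0, hK⟩ := phi_decay m p 0 hm
    exact ⟨K, hK0, fun i hi u => by simpa [Nat.le_zero.mp hi] using hK u⟩
  | succ k ih =>
    obtain ⟨K, hK0, hK⟩ := ih
    obtain ⟨K', hK'0, hK'⟩ := phi_decay m p (k + 1) hm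
    refine ⟨max K K', le_max_of_le_left hK0, fun i hi u => ?_⟩
    rcases Nat.lt_succ_iff_lt_or_eq.mp (Nat.lt_succ_of_le hi) with h | h
    · exact le_max_of_le_left (hK i (Nat.lt_succ_iff.mp h) u)
    · subst h; exact le_max_of_le_right (hK' u)

end Stmt6Aux

namespace Stmt6Aux

lemma iteratedDeriv_zero_fun (i : ℕ) :
    iteratedDeriv i (fun _ : ℝ => (0:ℝ)) = fun _ => (0:ℝ) := by
  induction i with
  | zero => simp
  | succ i ih =>
    rw [iteratedDeriv_succ',
      show deriv (fun _ : ℝ => (0:ℝ)) = fun _ : ℝ => (0:ℝ) from funext fun x => deriv_const x 0,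
      ih]

lemma iteratedDeriv_one_sub (i : ℕ) (hi : 0 < i) (f : ℝ → ℝ) (x : ℝ) :
    iteratedDeriv i (fun z => 1 - f z) x = -iteratedDeriv i f x := by
  rw [iteratedDeriv_const_sub hi]
  exact iteratedDeriv_neg i f x

end Stmt6Aux

namespace Stmt6Aux

set_option maxHeartbeats 1000000 in
lemma key (α T x : ℝ) (hα0 : 0 < α) (hα1 : α < 1 / 100) (hT : 2 ≤ T) :
    max (|x| / (2 * T ^ (2 - α / 2))) (T ^ (-1 + α / 4))
      / (1 + ((4 * T ^ 2 - x ^ 2) / (4 * T ^ (2 - α / 2))) ^ 2) ≤ 2 * T ^ (-1 + α) := by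
  have hT0 : (0:ℝ) < T := by linarith
  have hT1 : (1:ℝ) ≤ T := by linarith
  set a : ℝ := T ^ (-1 + α) with hadef
  have ha0 : 0 < a := Real.rpow_pos_of_pos hT0 _
  set S : ℝ := T ^ (2 - α / 2) with hSdef
  have hS0 : 0 < S := Real.rpow_pos_of_pos hT0 _
  have haT : T⁻¹ ≤ a := by
    rw [← Real.rpow_neg_one T]
    exact Real.rpow_le_rpow_of_exponent_le hT1 (by linarith)
  have hb_le : T ^ (-1 + α / 4) ≤ a := Real.rpow_le_rpow_of_exponent_le hT1 (by linarith)
  have hTS : T * S⁻¹ = T ^ (-1 + α / 2) := by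
    calc T * S⁻¹ = T ^ (1:ℝ) * T ^ (-(2 - α / 2)) := by
          rw [Real.rpow_one, hSdef, Real.rpow_neg hT0.le]
      _ = T ^ (1 + -(2 - α / 2)) := (Real.rpow_add hT0 _ _).symm
      _ = T ^ (-1 + α / 2) := by ring_nf
  have hmid : T ^ (-1 + α / 2) ≤ a := Real.rpow_le_rpow_of_exponent_le hT1 (by linarith)
  set y : ℝ := (4 * T ^ 2 - x ^ 2) / (4 * S) with hy0
  have h1y : (0:ℝ) < 1 + y ^ 2 := by positivity
  have hyabs : |y| ≤ 1 + y ^ 2 := by nlinarith [sq_nonneg (|y| - 1), sq_abs y]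
  rw [div_le_iff₀ h1y]
  have h2a : (0:ℝ) < 2 * a := by positivity
  have h1le : (1:ℝ) ≤ 1 + y ^ 2 := by nlinarith [sq_nonneg y]
  apply max_le
  · -- bound on |x| / (2S)
    rcases le_total (|x|) (3 * T) with hx3 | hx3
    · -- small |x|
      have hstep : |x| / (2 * S) ≤ 2 * a := by
        calc |x| / (2 * S) ≤ 3 * T / (2 * S) := by gcongr
          _ = (3 / 2) * (T * S⁻¹) := by ring
          _ = (3 / 2) * T ^ (-1 + α / 2) := by rw [hTS]
          _ ≤ 2 * a := by nlinarith [Real.rpow_pos_of_pos hT0 (-1 + α / 2), hmid]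
      calc |x| / (2 * S) ≤ 2 * a := hstep
        _ ≤ 2 * a * (1 + y ^ 2) := le_mul_of_one_le_right h2a.le h1le
    · -- large |x|
      have h9 : 9 * T ^ 2 ≤ x ^ 2 := by nlinarith [sq_abs x]
      have hyneg : (5 / 36) * x ^ 2 / S ≤ 1 + y ^ 2 := by
        have e1 : (5 / 36) * x ^ 2 / S ≤ (x ^ 2 - 4 * T ^ 2) / (4 * S) := by
          rw [div_le_div_iff₀ (by positivity) (by positivity)]
          nlinarith
        have e2 : (x ^ 2 - 4 * T ^ 2) / (4 * S) = -y := by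
          rw [hy0]; ring
        calc (5 / 36) * x ^ 2 / S ≤ -y := e1.trans_eq e2
          _ ≤ |y| := neg_le_abs y
          _ ≤ 1 + y ^ 2 := hyabs
      have e2 : (5 / 36) * x ^ 2 ≤ (1 + y ^ 2) * S := by
        rw [div_le_iff₀ hS0] at hyneg; linarith
      have e1 : (1:ℝ) ≤ a * T := by
        rw [← inv_mul_cancel₀ hT0.ne']
        exact mul_le_mul_of_nonneg_right haT hT0.le
      have e3 : 3 * T * |x| ≤ x ^ 2 := by nlinarith [sq_abs x, abs_nonneg x]
      rw [div_le_iff₀ (by positivity : (0:ℝ) < 2 * S)]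
      nlinarith [mul_le_mul_of_nonneg_left e2 ha0.le,
        mul_le_mul_of_nonneg_left e3 ha0.le,
        mul_le_mul_of_nonneg_left e1 (by positivity : (0:ℝ) ≤ 3 * |x|),
        mul_pos ha0 (mul_pos h1y hS0), abs_nonneg x, hT0]
  · -- bound on T^(-1+α/4)
    calc T ^ (-1 + α / 4) ≤ a := hb_le
      _ ≤ 2 * a * (1 + y ^ 2) := by nlinarith [mul_le_mul_of_nonneg_left h1le h2a.le]

end Stmt6Aux


/-- The smooth cutoff W(t) = W_α(t). -/
noncomputable def Wwt (α T t : ℝ) : ℝ :=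
  (1 - Real.exp (-(t / (2 * T) ^ (1 - α / 2)) ^ (2 * ⌈(1000 : ℝ) / α⌉₊))) *
    (1 - Real.exp (-((4 * T ^ 2 - t ^ 2) / (4 * T ^ (2 - α / 2))) ^ (2 * ⌈(1000 : ℝ) / α⌉₊)))

set_option maxHeartbeats 1600000 in
/-- Derivative bounds W^{(k)}(t) ≪ (T^{-1+α})^k, uniformly in t ∈ ℝ. -/
theorem stmt_6 (α : ℝ) (hα0 : 0 < α) (hα1 : α < 1 / 100) (k : ℕ) :
    ∃ C : ℝ, ∀ T : ℝ, 2 ≤ T → ∀ t : ℝ,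
      |iteratedDeriv k (Wwt α T) t| ≤ C * (T ^ (-1 + α)) ^ k := by
  have hm : 1 ≤ ⌈(1000 : ℝ) / α⌉₊ := Nat.one_le_ceil_iff.mpr (by positivity)
  set m := ⌈(1000 : ℝ) / α⌉₊ with hmdef
  obtain ⟨K0, hK00, hK0⟩ := Stmt6Aux.phi_decay_max m 0 k hm
  obtain ⟨K, hKge, hK⟩ := Stmt6Aux.phi_decay_max m k k hm
  set E1 : ℝ := K0 + 1 with hE1def
  have hE1 : (1:ℝ) ≤ E1 := by linarith
  set E2 : ℝ := (k.factorial : ℝ) * K * 2 ^ k + 1 with hE2def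
  have hE2 : (1:ℝ) ≤ E2 := by
    have : (0:ℝ) ≤ (k.factorial : ℝ) * K * 2 ^ k := by positivity
    linarith
  refine ⟨E1 * E2 * 2 ^ k, fun T hT t => ?_⟩
  have hT0 : (0:ℝ) < T := by linarith
  have hT1 : (1:ℝ) ≤ T := by linarith
  set a : ℝ := T ^ (-1 + α) with hadef
  have ha0 : 0 < a := Real.rpow_pos_of_pos hT0 _
  set A : ℝ := (2 * T) ^ (1 - α / 2) with hAdef
  have hA0 : 0 < A := Real.rpow_pos_of_pos (by linarith) _
  set S : ℝ := T ^ (2 - α / 2) with hSdef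
  have hS0 : 0 < S := Real.rpow_pos_of_pos hT0 _
  set q : ℝ → ℝ := fun t => (4 * T ^ 2 - t ^ 2) / (4 * S) with hqdef
  set f1 : ℝ → ℝ := fun t => 1 - Stmt6Aux.phi (2 * m) (t / A) with hf1def
  set f2 : ℝ → ℝ := fun t => 1 - Stmt6Aux.phi (2 * m) (q t) with hf2def
  have hW : Wwt α T = fun s => f1 s * f2 s := rfl
  -- basic rpow comparisons
  have haT : T⁻¹ ≤ a := by
    rw [← Real.rpow_neg_one T]
    exact Real.rpow_le_rpow_of_exponent_le hT1 (by linarith)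
  have hb_le : T ^ (-1 + α / 4) ≤ a := Real.rpow_le_rpow_of_exponent_le hT1 (by linarith)
  have hTS : T * S⁻¹ = T ^ (-1 + α / 2) := by
    calc T * S⁻¹ = T ^ (1:ℝ) * T ^ (-(2 - α / 2)) := by
          rw [Real.rpow_one, hSdef, Real.rpow_neg hT0.le]
      _ = T ^ (1 + -(2 - α / 2)) := (Real.rpow_add hT0 _ _).symm
      _ = T ^ (-1 + α / 2) := by ring_nf
  have hmid : T ^ (-1 + α / 2) ≤ a := Real.rpow_le_rpow_of_exponent_le hT1 (by linarith)
  have hAinv : A⁻¹ ≤ a := by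
    have h1 : T ^ (1 - α / 2) ≤ A := by
      rw [hAdef]
      exact Real.rpow_le_rpow hT0.le (by linarith) (by linarith)
    have h2 : A⁻¹ ≤ (T ^ (1 - α / 2))⁻¹ :=
      inv_anti₀ (Real.rpow_pos_of_pos hT0 _) h1
    have h3 : (T ^ (1 - α / 2))⁻¹ = T ^ (-(1 - α / 2)) := (Real.rpow_neg hT0.le _).symm
    have h4 : T ^ (-(1 - α / 2)) ≤ a := Real.rpow_le_rpow_of_exponent_le hT1 (by linarith)
    linarith [h2, h3 ▸ h2]
  -- derivatives of q
  have hq1 : deriv q = fun x : ℝ => -(2 * x) / (4 * S) := by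
    funext x
    have h : HasDerivAt q (-(2 * x) / (4 * S)) x := by
      rw [hqdef]
      have h := ((hasDerivAt_pow 2 x).const_sub (4 * T ^ 2)).div_const (4 * S)
      simpa using h
    exact h.deriv
  have hq2 : deriv (deriv q) = fun _ : ℝ => -2 / (4 * S) := by
    rw [hq1]; funext x
    have h : HasDerivAt (fun x : ℝ => -(2 * x) / (4 * S)) (-2 / (4 * S)) x := by
      have h := (((hasDerivAt_id x).const_mul (2:ℝ)).neg).div_const (4 * S)
      simpa using h
    exact h.deriv
  have hq3 : deriv (deriv (deriv q)) = fun _ : ℝ => (0:ℝ) := by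
    rw [hq2]; funext x; exact deriv_const x _
  have hb0 : (0:ℝ) < T ^ (-1 + α / 4) := Real.rpow_pos_of_pos hT0 _
  -- bounds on the iterated derivatives of q
  have hqD : ∀ x : ℝ, ∀ i : ℕ, 1 ≤ i →
      ‖iteratedFDeriv ℝ i q x‖ ≤ (max (|x| / (2 * S)) (T ^ (-1 + α / 4))) ^ i := by
    intro x i h1
    set D := max (|x| / (2 * S)) (T ^ (-1 + α / 4)) with hDdef
    have hD0 : 0 < D := lt_of_lt_of_le hb0 (le_max_right _ _)
    rw [norm_iteratedFDeriv_eq_norm_iteratedDeriv, Real.norm_eq_abs]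
    match i, h1 with
    | 1, _ => -- first derivative
      rw [iteratedDeriv_one, hq1, pow_one]
      have e : -(2 * x) / (4 * S) = -(x / (2 * S)) := by field_simp; ring
      show |(-(2 * x) / (4 * S))| ≤ D
      rw [e, abs_neg, abs_div, abs_of_pos (by positivity : (0:ℝ) < 2 * S)]
      exact le_max_left _ _
    | 2, _ => -- second derivative
      have h : iteratedDeriv 2 q = deriv (deriv q) := by
        rw [iteratedDeriv_succ', iteratedDeriv_one]
      rw [h, hq2]
      have e : |(-2 / (4 * S) : ℝ)| = 1 / (2 * S) := by
        rw [abs_div, abs_neg, abs_two, abs_of_pos (by positivity : (0:ℝ) < 4 * S),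
          div_eq_div_iff (by positivity) (by positivity)]
        ring
      show |(-2 / (4 * S) : ℝ)| ≤ D ^ 2
      rw [e]
      have h1 : (T ^ (-1 + α / 4) : ℝ) ^ 2 = T ^ ((-1 + α / 4) * 2) := by
        rw [← Real.rpow_natCast (T ^ (-1 + α / 4)) 2, ← Real.rpow_mul hT0.le]
        norm_num
      have h2 : T ^ ((-1 + α / 4) * 2) = S⁻¹ := by
        rw [hSdef, ← Real.rpow_neg hT0.le, show (-1 + α / 4) * 2 = -(2 - α / 2) by ring]
      have h3 : (1:ℝ) / (2 * S) ≤ S⁻¹ := by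
        rw [one_div, inv_le_inv₀ (by positivity) hS0]
        linarith
      calc (1:ℝ) / (2 * S) ≤ S⁻¹ := h3
        _ = (T ^ (-1 + α / 4)) ^ 2 := by rw [h1, h2]
        _ ≤ D ^ 2 := by
            apply pow_le_pow_left₀ hb0.le (le_max_right _ _)
    | (j+3), _ => -- higher derivatives vanish
      have h : iteratedDeriv (j + 3) q = iteratedDeriv j (deriv (deriv (deriv q))) := by
        rw [show j + 3 = (j + 2) + 1 from rfl, iteratedDeriv_succ',
          show j + 2 = (j + 1) + 1 from rfl, iteratedDeriv_succ', iteratedDeriv_succ']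
      rw [h, hq3, Stmt6Aux.iteratedDeriv_zero_fun]
      simpa using pow_nonneg hD0.le (j + 3)
  -- bound for f1
  have hf1b : ∀ i ≤ k, ∀ x : ℝ, ‖iteratedFDeriv ℝ i f1 x‖ ≤ E1 * a ^ i := by
    intro i hi x
    rw [norm_iteratedFDeriv_eq_norm_iteratedDeriv, Real.norm_eq_abs]
    rcases Nat.eq_zero_or_pos i with rfl | hi0
    · simp only [iteratedDeriv_zero, pow_zero, mul_one]
      have h1 : 0 ≤ Stmt6Aux.phi (2 * m) (x / A) := Stmt6Aux.phi_nonneg _ _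
      have h2 : Stmt6Aux.phi (2 * m) (x / A) ≤ 1 := Stmt6Aux.phi_le_one m _
      have h3 : |f1 x| ≤ 1 := by
        rw [hf1def]
        rw [abs_le]; constructor <;> simp <;> linarith
      linarith
    · rw [hf1def]
      rw [Stmt6Aux.iteratedDeriv_one_sub i hi0, abs_neg]
      have hcm : (fun z : ℝ => Stmt6Aux.phi (2 * m) (z / A))
          = fun z : ℝ => Stmt6Aux.phi (2 * m) (A⁻¹ * z) := by
        funext z; rw [div_eq_inv_mul]
      rw [hcm, iteratedDeriv_comp_const_mul (Stmt6Aux.contDiff_phi (2 * m)) A⁻¹, abs_mul, abs_pow]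
      have hphib : |iteratedDeriv i (Stmt6Aux.phi (2 * m)) (A⁻¹ * x)| ≤ K0 := by
        have h := hK0 i hi (A⁻¹ * x)
        simpa using h
      have hAa : |A⁻¹| ≤ a := by
        rw [abs_of_pos (inv_pos.mpr hA0)]; exact hAinv
      calc |A⁻¹| ^ i * |iteratedDeriv i (Stmt6Aux.phi (2 * m)) (A⁻¹ * x)|
          ≤ a ^ i * K0 := by
            apply mul_le_mul (pow_le_pow_left₀ (abs_nonneg _) hAa i) hphib (abs_nonneg _)
              (by positivity)
        _ ≤ E1 * a ^ i := by
            rw [mul_comm]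
            apply mul_le_mul_of_nonneg_right (by rw [hE1def]; linarith) (by positivity)
  -- smoothness of q
  have hqC : ∀ {N : WithTop ℕ∞}, ContDiff ℝ N q := by
    intro N
    rw [hqdef]
    exact (contDiff_const.sub (contDiff_id.pow 2)).div_const _
  -- the key pointwise inequality
  have hKEY : ∀ x : ℝ, max (|x| / (2 * S)) (T ^ (-1 + α / 4)) / (1 + (q x) ^ 2) ≤ 2 * a :=
    fun x => Stmt6Aux.key α T x hα0 hα1 hT
  -- bound for f2
  have hf2b : ∀ i ≤ k, ∀ x : ℝ, ‖iteratedFDeriv ℝ i f2 x‖ ≤ E2 * a ^ i := by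
    intro i hi x
    rw [norm_iteratedFDeriv_eq_norm_iteratedDeriv, Real.norm_eq_abs]
    rcases Nat.eq_zero_or_pos i with rfl | hi0
    · simp only [iteratedDeriv_zero, pow_zero, mul_one]
      have h1 : 0 ≤ Stmt6Aux.phi (2 * m) (q x) := Stmt6Aux.phi_nonneg _ _
      have h2 : Stmt6Aux.phi (2 * m) (q x) ≤ 1 := Stmt6Aux.phi_le_one m _
      have h3 : |f2 x| ≤ 1 := by
        rw [hf2def, abs_le]; constructor <;> simp <;> linarith
      linarith
    · rw [hf2def, Stmt6Aux.iteratedDeriv_one_sub i hi0, abs_neg, ← Real.norm_eq_abs,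
        ← norm_iteratedFDeriv_eq_norm_iteratedDeriv]
      set y := q x with hy0
      set D := max (|x| / (2 * S)) (T ^ (-1 + α / 4)) with hDdef
      have hD0 : 0 < D := lt_of_lt_of_le hb0 (le_max_right _ _)
      have h1y : (0:ℝ) < 1 + y ^ 2 := by positivity
      have hCb : ∀ j, j ≤ i → ‖iteratedFDeriv ℝ j (Stmt6Aux.phi (2 * m)) (q x)‖
          ≤ K / (1 + y ^ 2) ^ i := by
        intro j hj
        rw [norm_iteratedFDeriv_eq_norm_iteratedDeriv, Real.norm_eq_abs]
        have h := hK j (hj.trans hi) y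
        have h2 : |iteratedDeriv j (Stmt6Aux.phi (2 * m)) y| ≤ K / (1 + y ^ 2) ^ k := by
          rw [le_div_iff₀ (by positivity)]; exact h
        refine h2.trans ?_
        exact div_le_div_of_nonneg_left hKge (by positivity)
          (pow_le_pow_right₀ (by nlinarith [sq_nonneg y]) hi)
      have hDb : ∀ j, 1 ≤ j → j ≤ i → ‖iteratedFDeriv ℝ j q x‖ ≤ D ^ j :=
        fun j h1 _ => hqD x j h1
      have hcomp := norm_iteratedFDeriv_comp_le (𝕜 := ℝ)
        (g := Stmt6Aux.phi (2 * m)) (f := q) (n := i) (N := (i : WithTop ℕ∞))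
        (Stmt6Aux.contDiff_phi (2 * m)) hqC le_rfl x hCb hDb
      have hKx := hKEY x
      calc ‖iteratedFDeriv ℝ i (fun z => Stmt6Aux.phi (2 * m) (q z)) x‖
          = ‖iteratedFDeriv ℝ i (Stmt6Aux.phi (2 * m) ∘ q) x‖ := rfl
        _ ≤ (i.factorial : ℝ) * (K / (1 + y ^ 2) ^ i) * D ^ i := hcomp
        _ = (i.factorial : ℝ) * K * (D / (1 + y ^ 2)) ^ i := by
            rw [div_pow]; ring
        _ ≤ (i.factorial : ℝ) * K * (2 * a) ^ i := by
            apply mul_le_mul_of_nonneg_left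
              (pow_le_pow_left₀ (by positivity) hKx i) (by positivity)
        _ = ((i.factorial : ℝ) * K * 2 ^ i) * a ^ i := by rw [mul_pow]; ring
        _ ≤ ((k.factorial : ℝ) * K * 2 ^ k) * a ^ i := by
            apply mul_le_mul_of_nonneg_right ?_ (by positivity)
            apply mul_le_mul ?_ ?_ (by positivity) (by positivity)
            · exact mul_le_mul_of_nonneg_right
                (by exact_mod_cast Nat.factorial_le hi) hKge
            · exact pow_le_pow_right₀ one_le_two hi
        _ ≤ E2 * a ^ i := by
            apply mul_le_mul_of_nonneg_right (by rw [hE2def]; linarith) (by positivity)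
  -- final assembly via the product rule
  have hf1C : ContDiff ℝ (k : WithTop ℕ∞) f1 := by
    rw [hf1def]
    exact contDiff_const.sub ((Stmt6Aux.contDiff_phi (2 * m)).comp (contDiff_id.div_const A))
  have hf2C : ContDiff ℝ (k : WithTop ℕ∞) f2 := by
    rw [hf2def]
    exact contDiff_const.sub ((Stmt6Aux.contDiff_phi (2 * m)).comp hqC)
  have hmain := norm_iteratedFDeriv_mul_le (𝕜 := ℝ) (N := (k : WithTop ℕ∞))
    hf1C hf2C t le_rfl
  rw [← Real.norm_eq_abs, ← norm_iteratedFDeriv_eq_norm_iteratedDeriv, hW]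
  calc ‖iteratedFDeriv ℝ k (fun s => f1 s * f2 s) t‖
      ≤ ∑ i ∈ Finset.range (k + 1),
          (k.choose i : ℝ) * ‖iteratedFDeriv ℝ i f1 t‖ * ‖iteratedFDeriv ℝ (k - i) f2 t‖ :=
        hmain
    _ ≤ ∑ i ∈ Finset.range (k + 1),
          (k.choose i : ℝ) * (E1 * a ^ i) * (E2 * a ^ (k - i)) := by
        refine Finset.sum_le_sum fun i hi => ?_
        have hik : i ≤ k := Nat.lt_succ_iff.mp (Finset.mem_range.mp hi)
        have h1 := hf1b i hik t
        have h2 := hf2b (k - i) (Nat.sub_le k i) t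
        apply mul_le_mul (mul_le_mul_of_nonneg_left h1 (by positivity)) h2
          (norm_nonneg _) (by positivity)
    _ = E1 * E2 * 2 ^ k * a ^ k := by
        have hterm : ∀ i ∈ Finset.range (k + 1),
            (k.choose i : ℝ) * (E1 * a ^ i) * (E2 * a ^ (k - i))
              = (k.choose i : ℝ) * (E1 * E2 * a ^ k) := by
          intro i hi
          have hik : i ≤ k := Nat.lt_succ_iff.mp (Finset.mem_range.mp hi)
          have : a ^ i * a ^ (k - i) = a ^ k := by
            rw [← pow_add, Nat.add_sub_cancel' hik]
          calc (k.choose i : ℝ) * (E1 * a ^ i) * (E2 * a ^ (k - i))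
              = (k.choose i : ℝ) * (E1 * E2 * (a ^ i * a ^ (k - i))) := by ring
            _ = (k.choose i : ℝ) * (E1 * E2 * a ^ k) := by rw [this]
        rw [Finset.sum_congr rfl hterm, ← Finset.sum_mul]
        have hsum : (∑ i ∈ Finset.range (k + 1), (k.choose i : ℝ)) = 2 ^ k := by
          rw [← Nat.cast_sum]
          norm_cast
          exact Nat.sum_range_choose k
        rw [hsum]; ring
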